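/- In a traced Cartesian differential category, if f : A×X → X is linear in its second argument (i.e. D[f] ∘ ⟨a,x,0,y⟩ = f ∘ ⟨a,y⟩), then fix(f) = 0. -/

import Mathlib

open CategoryTheory CategoryTheory.Limits

universe v u

variable (C : Type u) [Category.{v} C] [HasFiniteProducts C]

/-- Cartesian left additive category: hom-sets are commutative monoids,
precomposition is additive, and the projections are additive maps. -/
class CartesianLeftAdditive [∀ A B : C, AddCommMonoid (A ⟶ B)] : Prop where
  comp_add : ∀ {X A B : C} (x : X ⟶ A) (f g : A ⟶ B), x ≫ (f + g) = x ≫ f + x ≫ g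
  comp_zero : ∀ {X A B : C} (x : X ⟶ A), x ≫ (0 : A ⟶ B) = 0
  add_comp_fst : ∀ {X A B : C} (x y : X ⟶ A ⨯ B),
    (x + y) ≫ (prod.fst : A ⨯ B ⟶ A) = x ≫ prod.fst + y ≫ prod.fst
  add_comp_snd : ∀ {X A B : C} (x y : X ⟶ A ⨯ B),
    (x + y) ≫ (prod.snd : A ⨯ B ⟶ B) = x ≫ prod.snd + y ≫ prod.snd
  zero_comp_fst : ∀ {X A B : C}, (0 : X ⟶ A ⨯ B) ≫ (prod.fst : A ⨯ B ⟶ A) = 0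
  zero_comp_snd : ∀ {X A B : C}, (0 : X ⟶ A ⨯ B) ≫ (prod.snd : A ⨯ B ⟶ B) = 0

/-- A differential combinator satisfying the axioms [CD.1]-[CD.7] of a
Cartesian differential category. -/
structure DiffComb [∀ A B : C, AddCommMonoid (A ⟶ B)] where
  D : ∀ {A B : C}, (A ⟶ B) → (A ⨯ A ⟶ B)
  cd1_zero : ∀ {A B : C}, D (0 : A ⟶ B) = 0
  cd1_add : ∀ {A B : C} (f g : A ⟶ B), D (f + g) = D f + D g
  cd2_zero : ∀ {A B X : C} (f : A ⟶ B) (x : X ⟶ A), prod.lift x 0 ≫ D f = 0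
  cd2_add : ∀ {A B X : C} (f : A ⟶ B) (x y z : X ⟶ A),
    prod.lift x (y + z) ≫ D f = prod.lift x y ≫ D f + prod.lift x z ≫ D f
  cd3_id : ∀ {A : C}, D (𝟙 A) = prod.snd
  cd3_fst : ∀ {A B : C},
    D (prod.fst : A ⨯ B ⟶ A) = (prod.snd : (A ⨯ B) ⨯ (A ⨯ B) ⟶ A ⨯ B) ≫ prod.fst
  cd3_snd : ∀ {A B : C},
    D (prod.snd : A ⨯ B ⟶ B) = (prod.snd : (A ⨯ B) ⨯ (A ⨯ B) ⟶ A ⨯ B) ≫ prod.snd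
  cd4 : ∀ {A B B' : C} (f : A ⟶ B) (g : A ⟶ B'), D (prod.lift f g) = prod.lift (D f) (D g)
  cd5 : ∀ {A B E : C} (f : A ⟶ B) (g : B ⟶ E), D (f ≫ g) = prod.lift (prod.fst ≫ f) (D f) ≫ D g
  cd6 : ∀ {A B X : C} (f : A ⟶ B) (x y z : X ⟶ A),
    prod.lift (prod.lift x y) (prod.lift 0 z) ≫ D (D f) = prod.lift x z ≫ D f
  cd7 : ∀ {A B X : C} (f : A ⟶ B) (x y z : X ⟶ A),
    prod.lift (prod.lift x y) (prod.lift z 0) ≫ D (D f) =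
      prod.lift (prod.lift x z) (prod.lift y 0) ≫ D (D f)

variable {C}

/-- The tangent bundle functor on maps: `T f = ⟨f ∘ π₁, D[f]⟩`. -/
noncomputable def DiffComb.T [∀ A B : C, AddCommMonoid (A ⟶ B)] (Dc : DiffComb C) {A B : C}
    (f : A ⟶ B) : A ⨯ A ⟶ B ⨯ B :=
  prod.lift (prod.fst ≫ f) (Dc.D f)

/-- The canonical middle-swap isomorphism `c = ⟨π₁,π₃,π₂,π₄⟩`. -/
noncomputable def cmap (A B X Y : C) : (A ⨯ B) ⨯ (X ⨯ Y) ⟶ (A ⨯ X) ⨯ (B ⨯ Y) :=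
  prod.lift (prod.map prod.fst prod.fst) (prod.map prod.snd prod.snd)

/-- A parametrized fixpoint operator. -/
structure ParamFix (C : Type u) [Category.{v} C] [HasFiniteProducts C] where
  fix : ∀ {A X : C}, (A ⨯ X ⟶ X) → (A ⟶ X)
  fix_eq : ∀ {A X : C} (f : A ⨯ X ⟶ X), prod.lift (𝟙 A) (fix f) ≫ f = fix f
  natural : ∀ {A B X : C} (g : A ⟶ B) (f : B ⨯ X ⟶ X),
    g ≫ fix f = fix (prod.map g (𝟙 X) ≫ f)

/-- The associativity map `(A ⨯ X) ⨯ Y ⟶ A ⨯ (X ⨯ Y)`. -/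
noncomputable def assoc3 (A X Y : C) : (A ⨯ X) ⨯ Y ⟶ A ⨯ (X ⨯ Y) :=
  prod.lift (prod.fst ≫ prod.fst) (prod.lift (prod.fst ≫ prod.snd) prod.snd)

/-- A Conway operator: a parametrized fixpoint operator satisfying
dinaturality and Bekič's axiom. -/
structure Conway (C : Type u) [Category.{v} C] [HasFiniteProducts C]
    extends ParamFix C where
  dinat : ∀ {A X Y : C} (f : A ⨯ X ⟶ Y) (g : Y ⟶ X),
    fix (f ≫ g) = fix (prod.map (𝟙 A) g ≫ f) ≫ g
  bekic : ∀ {A X Y : C} (f : A ⨯ (X ⨯ Y) ⟶ X) (g : A ⨯ (X ⨯ Y) ⟶ Y),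
    fix (prod.lift f g) =
      prod.lift
        (fix (prod.lift (𝟙 (A ⨯ X)) (fix (assoc3 A X Y ≫ g)) ≫ assoc3 A X Y ≫ f))
        (fix (prod.lift (prod.fst : A ⨯ Y ⟶ A)
          (prod.lift
            ((prod.fst : A ⨯ Y ⟶ A) ≫
              fix (prod.lift (𝟙 (A ⨯ X)) (fix (assoc3 A X Y ≫ g)) ≫ assoc3 A X Y ≫ f))
            (prod.snd : A ⨯ Y ⟶ Y)) ≫ g))

/-- in a traced Cartesian differential category, if
`f : A ⨯ X ⟶ X` is linear in its second argument
(`D[f] ∘ ⟨a,x,0,y⟩ = f ∘ ⟨a,y⟩`), then `fix f = 0`. -/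
theorem fix_of_linear_in_second_argument_is_zero
    [∀ A B : C, AddCommMonoid (A ⟶ B)] [CartesianLeftAdditive C]
    (Dc : DiffComb C) (Cw : Conway C)
    (hdf : ∀ {A X : C} (f : A ⨯ X ⟶ X),
      Dc.D (Cw.fix f) = Cw.fix (cmap A A X X ≫ Dc.T f) ≫ prod.snd)
    {A X : C} (f : A ⨯ X ⟶ X)
    (hf : ∀ {Z : C} (a : Z ⟶ A) (x y : Z ⟶ X),
      prod.lift (prod.lift a x) (prod.lift 0 y) ≫ Dc.D f = prod.lift a y ≫ f) :
    Cw.fix f = 0 := by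
  have h0 : prod.lift (𝟙 A) (0 : A ⟶ A) ≫ Dc.D (Cw.fix f) = 0 := Dc.cd2_zero _ _
  rw [hdf f] at h0
  -- naturality
  have hnat : prod.lift (𝟙 A) (0 : A ⟶ A) ≫ Cw.fix (cmap A A X X ≫ Dc.T f)
      = Cw.fix (prod.map (prod.lift (𝟙 A) (0 : A ⟶ A)) (𝟙 (X ⨯ X))
          ≫ cmap A A X X ≫ Dc.T f) := Cw.natural _ _
  -- compute the inner map
  have hpre : prod.map (prod.lift (𝟙 A) (0 : A ⟶ A)) (𝟙 (X ⨯ X)) ≫ cmap A A X X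
      = prod.lift (prod.lift prod.fst (prod.snd ≫ prod.fst))
          (prod.lift 0 (prod.snd ≫ prod.snd)) := by
    apply Limits.prod.hom_ext <;> apply Limits.prod.hom_ext <;>
      simp [cmap, CartesianLeftAdditive.comp_zero,
        CartesianLeftAdditive.zero_comp_fst, CartesianLeftAdditive.zero_comp_snd,
        prod.lift_fst, prod.lift_snd, prod.lift_fst_assoc, prod.lift_snd_assoc]
  have hh : prod.map (prod.lift (𝟙 A) (0 : A ⟶ A)) (𝟙 (X ⨯ X)) ≫ cmap A A X X ≫ Dc.T f
      = prod.lift (prod.map (𝟙 A) prod.fst ≫ f) (prod.map (𝟙 A) prod.snd ≫ f) := by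
    rw [← Category.assoc, hpre]
    unfold DiffComb.T
    rw [prod.comp_lift]
    have e1 : prod.lift (prod.fst : A ⨯ (X ⨯ X) ⟶ A) (prod.snd ≫ prod.fst)
        = prod.map (𝟙 A) prod.fst := by apply Limits.prod.hom_ext <;> simp [prod.lift_fst, prod.lift_snd, prod.lift_fst_assoc, prod.lift_snd_assoc]
    have e2 : prod.lift (prod.fst : A ⨯ (X ⨯ X) ⟶ A) (prod.snd ≫ prod.snd)
        = prod.map (𝟙 A) prod.snd := by apply Limits.prod.hom_ext <;> simp [prod.lift_fst, prod.lift_snd, prod.lift_fst_assoc, prod.lift_snd_assoc]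
    congr 1
    · rw [← Category.assoc, prod.lift_fst, e1]
    · rw [hf prod.fst (prod.snd ≫ prod.fst) (prod.snd ≫ prod.snd), e2]
  -- Bekič computation
  have hb := Cw.bekic (prod.map (𝟙 A) prod.fst ≫ f) (prod.map (𝟙 A) prod.snd ≫ f)
  -- the second component collapses to fix f
  have hsnd : ∀ (t : A ⟶ X),
      prod.lift (prod.fst : A ⨯ X ⟶ A)
        (prod.lift ((prod.fst : A ⨯ X ⟶ A) ≫ t) (prod.snd : A ⨯ X ⟶ X))
        ≫ (prod.map (𝟙 A) prod.snd ≫ f) = f := by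
    intro t
    rw [← Category.assoc]
    have : prod.lift (prod.fst : A ⨯ X ⟶ A)
        (prod.lift ((prod.fst : A ⨯ X ⟶ A) ≫ t) (prod.snd : A ⨯ X ⟶ X))
        ≫ prod.map (𝟙 A) prod.snd = 𝟙 (A ⨯ X) := by
      apply Limits.prod.hom_ext <;> simp [prod.lift_fst, prod.lift_snd, prod.lift_fst_assoc, prod.lift_snd_assoc]
    rw [this, Category.id_comp]
  rw [← Category.assoc, hnat, hh] at h0
  calc Cw.fix f
      = Cw.fix (prod.lift (prod.map (𝟙 A) prod.fst ≫ f)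
          (prod.map (𝟙 A) prod.snd ≫ f)) ≫ prod.snd := by
        rw [hb, prod.lift_snd, hsnd]
    _ = 0 := h0
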